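/- There exists a constant C > 0 such that for all n ≥ 1, the variance of the number of ascending runs of a uniformly random function f : Fin n → Fin n satisfies | V_n − (e^{−1} − 2e^{−2})·n | ≤ C, where V_n = n^{−n} · Σ_{f : Fin n → Fin n} runs(f)² − E_n² and E_n = n^{−n} · Σ_{f : Fin n → Fin n} runs(f). In other words, V(R_n) = (e^{−1} − 2e^{−2})·n + O(1). -/

import Mathlib

/-- The number of ascending runs of `f`: the number of elements `j` that are the
start of an ascending run, i.e. every preimage `i` of `j` satisfies `j ≤ i`. -/
def numRuns {n : ℕ} (f : Fin n → Fin n) : ℕ :=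
  (Finset.univ.filter (fun j : Fin n => ∀ i : Fin n, f i = j → j ≤ i)).card

/-- The mean number of ascending runs of a uniformly random `n`-mapping. -/
noncomputable def meanRuns (n : ℕ) : ℝ :=
  (∑ f : Fin n → Fin n, (numRuns f : ℝ)) / (n : ℝ) ^ n

/-- The variance of the number of ascending runs of a uniformly random `n`-mapping. -/
noncomputable def varRuns (n : ℕ) : ℝ :=
  (∑ f : Fin n → Fin n, (numRuns f : ℝ) ^ 2) / (n : ℝ) ^ n - (meanRuns n) ^ 2

open Finset

section cards
variable {n : ℕ}

lemma card_lt (j : Fin n) : (univ.filter (· < j)).card = (j:ℕ) := by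
  rw [show univ.filter (· < j) = Finset.Iio j by ext x; simp]; simp

lemma card_not_lt (j : Fin n) : (univ.filter (fun i => ¬ i < j)).card = n - (j:ℕ) := by
  rw [show univ.filter (fun i => ¬ i < j) = Finset.Ici j by ext x; simp]; simp

lemma card_mid {j k : Fin n} : (univ.filter (fun i => ¬ i < j ∧ i < k)).card = (k:ℕ) - (j:ℕ) := by
  rw [show univ.filter (fun i => ¬ i < j ∧ i < k) = Finset.Ico j k by
    ext x; simp [not_lt, and_comm]]
  simp

lemma card_top {j k : Fin n} (hjk : j ≤ k) :
    (univ.filter (fun i => ¬ i < j ∧ ¬ i < k)).card = n - (k:ℕ) := by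
  rw [show univ.filter (fun i => ¬ i < j ∧ ¬ i < k) = Finset.Ici k by
    ext x; simp only [mem_filter, mem_univ, true_and, Finset.mem_Ici, not_lt]
    exact ⟨fun h => h.2, fun h => ⟨hjk.trans h, h⟩⟩]
  simp

lemma prod_ite_lt (j : Fin n) (c d : ℝ) :
    ∏ i : Fin n, (if i < j then c else d) = c^(j:ℕ) * d^(n-(j:ℕ)) := by
  rw [Finset.prod_ite (f := fun _ => c) (g := fun _ => d), Finset.prod_const, Finset.prod_const,
    card_lt, card_not_lt]

lemma prod_ite_lt_lt {j k : Fin n} (hjk : j < k) (c d e : ℝ) :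
    ∏ i : Fin n, (if i < j then c else if i < k then d else e)
      = c^(j:ℕ) * d^((k:ℕ)-(j:ℕ)) * e^(n-(k:ℕ)) := by
  rw [Finset.prod_ite (f := fun _ => c), Finset.prod_const, card_lt,
    Finset.prod_ite (f := fun _ => d) (g := fun _ => e), Finset.prod_const, Finset.prod_const,
    Finset.filter_filter, Finset.filter_filter, card_mid, card_top hjk.le, mul_assoc]
end cards

def w {n : ℕ} (j i x : Fin n) : ℝ := if i < j ∧ x = j then 0 else 1

lemma ind_eq_prod {n : ℕ} (f : Fin n → Fin n) (j : Fin n) :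
    (if (∀ i, f i = j → j ≤ i) then (1:ℝ) else 0) = ∏ i, w j i (f i) := by
  split_ifs with h
  · rw [eq_comm, Finset.prod_eq_one]
    intro i _
    simp only [w, ite_eq_right_iff]
    rintro ⟨hij, hfi⟩
    exact absurd (h i hfi) (not_le.mpr hij)
  · push_neg at h
    obtain ⟨i, hfi, hij⟩ := h
    rw [eq_comm]
    apply Finset.prod_eq_zero (Finset.mem_univ i)
    simp [w, hfi, hij]

lemma numRuns_cast {n : ℕ} (f : Fin n → Fin n) :
    (numRuns f : ℝ) = ∑ j, ∏ i, w j i (f i) := by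
  simp only [← ind_eq_prod, numRuns, Finset.card_filter]
  push_cast
  rfl

lemma sum_fun {n : ℕ} (F : Fin n → Fin n → ℝ) :
    ∑ f : Fin n → Fin n, ∏ i, F i (f i) = ∏ i, ∑ x, F i x := by
  rw [Finset.prod_univ_sum, Fintype.piFinset_univ]

lemma sum_ite_eq_card {n : ℕ} (p : Fin n → Prop) [DecidablePred p] :
    ∑ x : Fin n, (if p x then (0:ℝ) else 1) = n - (univ.filter p).card := by
  rw [show (fun x => if p x then (0:ℝ) else 1) = fun x => 1 - (if p x then 1 else 0) from
    funext fun x => by split_ifs <;> ring]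
  rw [Finset.sum_sub_distrib, Finset.sum_boole]
  simp

lemma sum_w {n : ℕ} (j i : Fin n) :
    ∑ x, w j i x = if i < j then ((n:ℝ) - 1) else n := by
  unfold w
  split_ifs with h
  · simp only [h, true_and]
    rw [sum_ite_eq_card]
    simp [Finset.filter_eq']
  · simp [h]

lemma sum_ww {n : ℕ} {j k : Fin n} (hjk : j < k) (i : Fin n) :
    ∑ x, w j i x * w k i x =
      if i < j then ((n:ℝ) - 2) else if i < k then (n:ℝ) - 1 else n := by
  have hW : ∀ x, w j i x * w k i x =
      if (i < j ∧ x = j) ∨ (i < k ∧ x = k) then (0:ℝ) else 1 := by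
    intro x
    unfold w
    split_ifs <;> simp_all <;> tauto
  simp only [hW]
  rw [sum_ite_eq_card]
  by_cases h1 : i < j
  · have h2 : i < k := h1.trans hjk
    have : (univ.filter fun x => (i < j ∧ x = j) ∨ (i < k ∧ x = k)) = {j, k} := by
      ext x; simp [h1, h2]
    rw [this, if_pos h1]
    rw [Finset.card_insert_of_notMem (by simp [hjk.ne]), Finset.card_singleton]
    push_cast; ring
  · rw [if_neg h1]
    by_cases h2 : i < k
    · have : (univ.filter fun x => (i < j ∧ x = j) ∨ (i < k ∧ x = k)) = {k} := by
        ext x; simp [h1, h2]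
      rw [this, if_pos h2, Finset.card_singleton]
      push_cast; ring
    · have : (univ.filter fun x => (i < j ∧ x = j) ∨ (i < k ∧ x = k)) = ∅ := by
        ext x; simp [h1, h2]
      rw [this, if_neg h2]
      simp

lemma ww_self {n : ℕ} (j i x : Fin n) : w j i x * w j i x = w j i x := by
  unfold w; split_ifs <;> ring

/-- the unnormalized pair correlation -/
noncomputable def G {n : ℕ} (j k : Fin n) : ℝ := ∏ i, ∑ x, w j i x * w k i x

lemma G_symm {n : ℕ} (j k : Fin n) : G j k = G k j := by
  unfold G
  congr 1; ext i; congr 1; ext x; ring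

lemma G_diag {n : ℕ} (j : Fin n) :
    G j j = ((n:ℝ)-1)^(j:ℕ) * (n:ℝ)^(n-(j:ℕ)) := by
  unfold G
  simp only [ww_self, sum_w]
  exact prod_ite_lt j _ _

lemma G_lt {n : ℕ} {j k : Fin n} (hjk : j < k) :
    G j k = ((n:ℝ)-2)^(j:ℕ) * ((n:ℝ)-1)^((k:ℕ)-(j:ℕ)) * (n:ℝ)^(n-(k:ℕ)) := by
  unfold G
  simp only [sum_ww hjk]
  exact prod_ite_lt_lt hjk _ _ _

lemma sum_numRuns (n : ℕ) :
    ∑ f : Fin n → Fin n, (numRuns f : ℝ)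
      = ∑ j : Fin n, ((n:ℝ)-1)^(j:ℕ) * (n:ℝ)^(n-(j:ℕ)) := by
  simp only [numRuns_cast]
  rw [Finset.sum_comm]
  refine Finset.sum_congr rfl fun j _ => ?_
  rw [sum_fun (fun i x => w j i x)]
  simp only [sum_w]
  exact prod_ite_lt j _ _

lemma sum_numRuns_sq (n : ℕ) :
    ∑ f : Fin n → Fin n, (numRuns f : ℝ)^2 = ∑ j : Fin n, ∑ k : Fin n, G j k := by
  have h : ∀ f : Fin n → Fin n, (numRuns f : ℝ)^2
      = ∑ j : Fin n, ∑ k : Fin n, ∏ i, (w j i (f i) * w k i (f i)) := by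
    intro f
    rw [numRuns_cast, sq, Finset.sum_mul_sum]
    refine Finset.sum_congr rfl fun j _ => Finset.sum_congr rfl fun k _ => ?_
    rw [Finset.prod_mul_distrib]
  simp only [h]
  rw [Finset.sum_comm]
  refine Finset.sum_congr rfl fun j _ => ?_
  rw [Finset.sum_comm]
  refine Finset.sum_congr rfl fun k _ => ?_
  exact sum_fun (fun i x => w j i x * w k i x)

/-- normalized correlation as a function of natural number indices -/
noncomputable def A (a b : ℝ) (j k : ℕ) : ℝ :=
  if j < k then b^j*a^(k-j) else if k < j then b^k*a^(j-k) else a^j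

lemma G_eq {n : ℕ} (j k : Fin n) :
    G j k = (n:ℝ)^n * A (1-1/(n:ℝ)) (1-2/(n:ℝ)) (j:ℕ) (k:ℕ) := by
  have hn : (n:ℝ) ≠ 0 := by
    have := j.pos; positivity
  have ha : ((n:ℝ)-1) = (1-1/(n:ℝ))*n := by field_simp
  have hb : ((n:ℝ)-2) = (1-2/(n:ℝ))*n := by field_simp
  set a := (1-1/(n:ℝ)); set b := (1-2/(n:ℝ))
  have key : ∀ j k : Fin n, j < k →
      G j k = (n:ℝ)^n * (b^(j:ℕ) * a^((k:ℕ)-(j:ℕ))) := by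
    intro j k hjk
    rw [G_lt hjk, ha, hb, mul_pow, mul_pow]
    have : (n:ℝ)^(j:ℕ) * (n:ℝ)^((k:ℕ)-(j:ℕ)) * (n:ℝ)^(n-(k:ℕ)) = (n:ℝ)^n := by
      rw [← pow_add, ← pow_add]
      congr 1
      have h1 : (j:ℕ) ≤ (k:ℕ) := Fin.le_iff_val_le_val.mp hjk.le
      have h2 : (k:ℕ) < n := k.isLt
      omega
    calc (b^(j:ℕ) * (n:ℝ)^(j:ℕ)) * (a^((k:ℕ)-(j:ℕ)) * (n:ℝ)^((k:ℕ)-(j:ℕ))) * (n:ℝ)^(n-(k:ℕ))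
        = (b^(j:ℕ) * a^((k:ℕ)-(j:ℕ))) * ((n:ℝ)^(j:ℕ) * (n:ℝ)^((k:ℕ)-(j:ℕ)) * (n:ℝ)^(n-(k:ℕ))) := by
          ring
      _ = (n:ℝ)^n * (b^(j:ℕ) * a^((k:ℕ)-(j:ℕ))) := by rw [this]; ring
  rcases lt_trichotomy j k with h | h | h
  · rw [key j k h, A, if_pos (by exact_mod_cast h)]
  · subst h
    rw [G_diag, A, if_neg (lt_irrefl _), if_neg (lt_irrefl _), ha, mul_pow]
    have : (n:ℝ)^(j:ℕ) * (n:ℝ)^(n-(j:ℕ)) = (n:ℝ)^n := by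
      rw [← pow_add]; congr 1; have := j.isLt; omega
    calc a^(j:ℕ) * (n:ℝ)^(j:ℕ) * (n:ℝ)^(n-(j:ℕ)) = a^(j:ℕ) * ((n:ℝ)^(j:ℕ) * (n:ℝ)^(n-(j:ℕ))) := by ring
      _ = (n:ℝ)^n * a^(j:ℕ) := by rw [this]; ring
  · rw [G_symm, key k j h, A, if_neg (by have := Fin.lt_iff_val_lt_val.mp h; omega),
      if_pos (by exact_mod_cast h)]

lemma swap_triangle (F : ℕ → ℕ → ℝ) (n : ℕ) :
    ∑ j ∈ Finset.range n, ∑ k ∈ Finset.Ico (j+1) n, F j k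
      = ∑ k ∈ Finset.range n, ∑ j ∈ Finset.range k, F j k := by
  have h := Finset.sum_Ico_Ico_comm 0 n F
  simp only [← Finset.range_eq_Ico] at h
  have hL : ∑ j ∈ Finset.range n, ∑ k ∈ Finset.Ico j n, F j k
      = ∑ j ∈ Finset.range n, (F j j + ∑ k ∈ Finset.Ico (j+1) n, F j k) := by
    refine Finset.sum_congr rfl fun j hj => ?_
    exact Finset.sum_eq_sum_Ico_succ_bot (Finset.mem_range.mp hj) _
  have hR : ∑ k ∈ Finset.range n, ∑ j ∈ Finset.range (k+1), F j k
      = ∑ k ∈ Finset.range n, (∑ j ∈ Finset.range k, F j k + F k k) := by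
    refine Finset.sum_congr rfl fun k _ => ?_
    rw [Finset.sum_range_succ]
  rw [hL, hR] at h
  rw [Finset.sum_add_distrib] at h
  rw [Finset.sum_add_distrib] at h
  linarith

lemma sumA (a b : ℝ) (n : ℕ) :
    ∑ j ∈ Finset.range n, ∑ k ∈ Finset.range n, A a b j k
      = ∑ j ∈ Finset.range n, a^j
        + 2 * ∑ k ∈ Finset.range n, ∑ j ∈ Finset.range k, b^j * a^(k-j) := by
  have hsplit : ∀ j ∈ Finset.range n, ∑ k ∈ Finset.range n, A a b j k
      = (∑ k ∈ Finset.range j, b^k * a^(j-k)) + a^j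
        + ∑ k ∈ Finset.Ico (j+1) n, b^j * a^(k-j) := by
    intro j hj
    have hjn : j < n := Finset.mem_range.mp hj
    rw [Finset.range_eq_Ico, ← Finset.sum_Ico_consecutive _ (Nat.zero_le j) hjn.le,
      Finset.sum_eq_sum_Ico_succ_bot hjn, ← Finset.range_eq_Ico]
    have e1 : ∑ k ∈ Finset.range j, A a b j k = ∑ k ∈ Finset.range j, b^k * a^(j-k) := by
      refine Finset.sum_congr rfl fun k hk => ?_
      have := Finset.mem_range.mp hk
      rw [A, if_neg (by omega), if_pos this]
    have e2 : A a b j j = a^j := by rw [A, if_neg (by omega), if_neg (by omega)]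
    have e3 : ∑ k ∈ Finset.Ico (j+1) n, A a b j k
        = ∑ k ∈ Finset.Ico (j+1) n, b^j * a^(k-j) := by
      refine Finset.sum_congr rfl fun k hk => ?_
      have := (Finset.mem_Ico.mp hk).1
      rw [A, if_pos (by omega)]
    rw [e1, e2, e3]; ring
  rw [Finset.sum_congr rfl hsplit]
  rw [Finset.sum_add_distrib, Finset.sum_add_distrib, swap_triangle]
  ring

lemma meanRuns_eq (n : ℕ) (hn : 1 ≤ n) :
    meanRuns n = ∑ j ∈ Finset.range n, (1-1/(n:ℝ))^j := by
  have hn0 : (n:ℝ) ≠ 0 := Nat.cast_ne_zero.mpr (by omega)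
  have hnn : ((n:ℝ))^n ≠ 0 := pow_ne_zero _ hn0
  rw [meanRuns, sum_numRuns, Fin.sum_univ_eq_sum_range (fun j => ((n:ℝ)-1)^j * (n:ℝ)^(n-j))]
  rw [div_eq_iff hnn, Finset.sum_mul]
  refine Finset.sum_congr rfl fun j hj => ?_
  have hjn : j < n := Finset.mem_range.mp hj
  have ha : ((n:ℝ)-1) = (1-1/(n:ℝ))*n := by field_simp
  rw [ha, mul_pow]
  have : (n:ℝ)^j * (n:ℝ)^(n-j) = (n:ℝ)^n := by
    rw [← pow_add]; congr 1; omega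
  calc (1-1/(n:ℝ))^j * (n:ℝ)^j * (n:ℝ)^(n-j)
      = (1-1/(n:ℝ))^j * ((n:ℝ)^j * (n:ℝ)^(n-j)) := by ring
    _ = (1-1/(n:ℝ))^j * (n:ℝ)^n := by rw [this]

lemma secondMoment_eq (n : ℕ) (hn : 1 ≤ n) :
    (∑ f : Fin n → Fin n, (numRuns f : ℝ)^2) / (n:ℝ)^n
      = (∑ j ∈ Finset.range n, (1-1/(n:ℝ))^j)
        + 2 * ∑ k ∈ Finset.range n, ∑ j ∈ Finset.range k,
            (1-2/(n:ℝ))^j * (1-1/(n:ℝ))^(k-j) := by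
  have hn0 : (n:ℝ) ≠ 0 := Nat.cast_ne_zero.mpr (by omega)
  have hnn : ((n:ℝ))^n ≠ 0 := pow_ne_zero _ hn0
  rw [sum_numRuns_sq]
  have h1 : ∑ j : Fin n, ∑ k : Fin n, G j k
      = (n:ℝ)^n * ∑ j ∈ Finset.range n, ∑ k ∈ Finset.range n,
          A (1-1/(n:ℝ)) (1-2/(n:ℝ)) j k := by
    simp only [G_eq, ← Finset.mul_sum]
    congr 1
    rw [Fin.sum_univ_eq_sum_range (fun j => ∑ k : Fin n, A (1-1/(n:ℝ)) (1-2/(n:ℝ)) j (k:ℕ))]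
    refine Finset.sum_congr rfl fun j _ => ?_
    exact Fin.sum_univ_eq_sum_range (fun k => A (1-1/(n:ℝ)) (1-2/(n:ℝ)) j k) n
  rw [h1, sumA, mul_comm, mul_div_assoc, div_self hnn, mul_one]

lemma alg (x A B : ℝ) (hx : x ≠ 0) :
    x*(1-A) + 2*((x*(1-B)/2 - x*(1-A))/(-(1/x))*(1-1/x)) - (x*(1-A))^2
      = x*A + x^2*((1-1/x)*B - A^2) := by
  field_simp
  ring

lemma varRuns_closed (n : ℕ) (hn : 1 ≤ n) :
    varRuns n = (n:ℝ) * (1-1/(n:ℝ))^n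
      + (n:ℝ)^2 * ((1-1/(n:ℝ)) * (1-2/(n:ℝ))^n - ((1-1/(n:ℝ))^n)^2) := by
  have hn0 : (n:ℝ) ≠ 0 := Nat.cast_ne_zero.mpr (by omega)
  have hn1 : (1:ℝ) ≤ n := by exact_mod_cast hn
  have hpos : 0 < 1/(n:ℝ) := by positivity
  set a : ℝ := 1-1/(n:ℝ) with ha
  set b : ℝ := 1-2/(n:ℝ) with hb
  have hba' : b - a = -(1/(n:ℝ)) := by rw [ha, hb]; ring
  have ha1 : a ≠ 1 := by rw [ha]; intro h; linarith [hpos]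
  have hb1 : b ≠ 1 := by
    rw [hb]; intro h
    have h2 : 2/(n:ℝ) = 0 := by linarith
    have : 1/(n:ℝ) = 0 := by linarith [h2, hpos]
    linarith
  have hba : b - a ≠ 0 := by rw [hba']; intro h; linarith
  have hPa : ∑ j ∈ Finset.range n, a^j = (n:ℝ)*(1 - a^n) := by
    rw [geom_sum_eq ha1, ha]
    field_simp
    ring
  have hPb : ∑ j ∈ Finset.range n, b^j = (n:ℝ)*(1 - b^n)/2 := by
    rw [geom_sum_eq hb1, hb]
    field_simp
    ring
  have hinner : ∀ k, ∑ j ∈ Finset.range k, b^j * a^(k-j) = (b^k - a^k)/(b-a) * a := by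
    intro k
    have step1 : ∑ j ∈ Finset.range k, b^j * a^(k-j)
        = (∑ j ∈ Finset.range k, b^j * a^(k-1-j)) * a := by
      rw [Finset.sum_mul]
      refine Finset.sum_congr rfl fun j hj => ?_
      have hjk : j < k := Finset.mem_range.mp hj
      have : a^(k-j) = a^(k-1-j) * a := by
        rw [← pow_succ]; congr 1; omega
      rw [this]; ring
    rw [step1]
    congr 1
    rw [eq_div_iff hba, geom_sum₂_mul]
  have hQ : ∑ k ∈ Finset.range n, ∑ j ∈ Finset.range k, b^j * a^(k-j)
      = (((n:ℝ)*(1 - b^n)/2) - ((n:ℝ)*(1 - a^n)))/(b-a) * a := by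
    simp only [hinner]
    rw [← Finset.sum_mul, ← Finset.sum_div, Finset.sum_sub_distrib, hPa, hPb]
  rw [varRuns, secondMoment_eq n hn, meanRuns_eq n hn, hPa, hQ, hba']
  exact alg (n:ℝ) (a^n) (b^n) hn0

lemma one_sub_le_exp_neg (x : ℝ) : 1 - x ≤ Real.exp (-x) := by
  have := Real.add_one_le_exp (-x)
  linarith

lemma exp_neg_le_one_sub (x : ℝ) (h0 : 0 ≤ x) (h2 : x ≤ 1/2) :
    Real.exp (-(x + 2*x^2)) ≤ 1 - x := by
  have h1 : 0 < 1 + (x + 2*x^2) := by nlinarith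
  have h3 : Real.exp (-(x+2*x^2)) ≤ (1+(x+2*x^2))⁻¹ := by
    rw [Real.exp_neg]
    exact inv_anti₀ h1 (by linarith [Real.add_one_le_exp (x+2*x^2)])
  refine h3.trans ?_
  rw [inv_le_iff_one_le_mul₀ h1]
  nlinarith

lemma pow_one_sub_le (δ : ℝ) (h0 : 0 ≤ δ) (h1 : δ ≤ 1) :
    ∀ n : ℕ, (1-δ)^n ≤ 1 - (n:ℝ)*δ + (n:ℝ)^2*δ^2 := by
  intro n
  induction n with
  | zero => simp
  | succ m ih =>
    have hd : (0:ℝ) ≤ 1 - δ := by linarith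
    have h3 : (1-δ)^(m+1) ≤ (1 - (m:ℝ)*δ + (m:ℝ)^2*δ^2) * (1-δ) := by
      rw [pow_succ]
      exact mul_le_mul_of_nonneg_right ih hd
    refine h3.trans ?_
    push_cast
    have hm : (0:ℝ) ≤ (m:ℝ) := Nat.cast_nonneg m
    nlinarith [sq_nonneg ((m:ℝ)*δ), mul_nonneg (mul_nonneg (mul_nonneg hm hm) h0) (mul_nonneg h0 h0)]

lemma pow_one_sub_ge (δ : ℝ) (h0 : 0 ≤ δ) (h1 : δ ≤ 1) (n : ℕ) :
    1 - (n:ℝ)*δ ≤ (1-δ)^n := by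
  have := one_add_mul_le_pow (a := -δ) (by linarith) n
  calc 1 - (n:ℝ)*δ = 1 + (n:ℝ)*(-δ) := by ring
    _ ≤ (1 + -δ)^n := this
    _ = (1-δ)^n := by rw [show (1:ℝ) + -δ = 1 - δ from by ring]

lemma A_bounds (n : ℕ) (hn : 2 ≤ n) :
    Real.exp (-1 - 2/(n:ℝ)) ≤ (1-1/(n:ℝ))^n ∧ (1-1/(n:ℝ))^n ≤ Real.exp (-1) := by
  have hN : (2:ℝ) ≤ n := by exact_mod_cast hn
  have hN0 : (0:ℝ) < n := by linarith
  have hx0 : (0:ℝ) ≤ 1/(n:ℝ) := by positivity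
  have hx2 : 1/(n:ℝ) ≤ 1/2 := by
    rw [div_le_div_iff₀ hN0 (by norm_num)]; linarith
  constructor
  · have h1 : Real.exp (-(1/(n:ℝ) + 2*(1/(n:ℝ))^2))^n ≤ (1-1/(n:ℝ))^n :=
      pow_le_pow_left₀ (Real.exp_nonneg _) (exp_neg_le_one_sub _ hx0 hx2) n
    refine le_trans (le_of_eq ?_) h1
    rw [← Real.exp_nat_mul]
    congr 1
    first
    | (field_simp; ring)
    | field_simp
  · have h1 : (1-1/(n:ℝ))^n ≤ Real.exp (-(1/(n:ℝ)))^n :=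
      pow_le_pow_left₀ (by linarith) (one_sub_le_exp_neg _) n
    refine h1.trans (le_of_eq ?_)
    rw [← Real.exp_nat_mul]
    congr 1
    field_simp

lemma habs3 (X Y Z : ℝ) : |X + Y - Z| ≤ |X| + |Y| + |Z| := by
  have h1 : |X + Y - Z| ≤ |X + Y| + |Z| := by
    simpa [sub_eq_add_neg] using abs_add_le (X+Y) (-Z)
  have h2 : |X+Y| ≤ |X| + |Y| := abs_add_le _ _
  linarith


set_option maxHeartbeats 1000000

/-- The variance of the number of ascending runs of a random `n`-mapping is
`(e⁻¹ - 2e⁻²)·n + O(1)`. -/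
theorem varRuns_asymptotic :
    ∃ C : ℝ, 0 < C ∧ ∀ n : ℕ, 1 ≤ n →
      |varRuns n - (Real.exp (-1) - 2 * Real.exp (-2)) * n| ≤ C := by
  refine ⟨32, by norm_num, fun n hn => ?_⟩
  have hN1 : (1:ℝ) ≤ (n:ℝ) := by exact_mod_cast hn
  have hN0 : (0:ℝ) < n := by linarith
  have hNne : (n:ℝ) ≠ 0 := ne_of_gt hN0
  have hclosed := varRuns_closed n hn
  have he1 : Real.exp (-1) ≤ 1 := Real.exp_le_one_iff.mpr (by norm_num)
  have he2 : Real.exp (-2) ≤ 1 := Real.exp_le_one_iff.mpr (by norm_num)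
  have he1' : (0:ℝ) < Real.exp (-1) := Real.exp_pos _
  have he2' : (0:ℝ) < Real.exp (-2) := Real.exp_pos _
  by_cases hbig : 4 ≤ n
  · -- large n
    have hN4 : (4:ℝ) ≤ (n:ℝ) := by exact_mod_cast hbig
    have hNm : (3:ℝ) ≤ (n:ℝ) - 1 := by linarith
    have hNm0 : (0:ℝ) < (n:ℝ) - 1 := by linarith
    have hNmne : (n:ℝ) - 1 ≠ 0 := ne_of_gt hNm0
    have ha0 : (0:ℝ) < 1 - 1/(n:ℝ) := by
      have : 1/(n:ℝ) ≤ 1/4 := by rw [div_le_div_iff₀ hN0 (by norm_num)]; linarith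
      linarith
    have ha1 : 1 - 1/(n:ℝ) ≤ 1 := by
      have : (0:ℝ) ≤ 1/(n:ℝ) := by positivity
      linarith
    obtain ⟨hA_lb, hA_ub⟩ := A_bounds n (by omega)
    set A : ℝ := (1-1/(n:ℝ))^n with hAdef
    have hA0 : 0 ≤ A := by rw [hAdef]; exact pow_nonneg ha0.le n
    clear_value A
    have heq : Real.exp (-1 - 2/(n:ℝ)) = Real.exp (-1) * Real.exp (-(2/(n:ℝ))) := by
      rw [← Real.exp_add, show (-1) + -(2/(n:ℝ)) = -1 - 2/(n:ℝ) from by ring]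
    have hexpnn : 0 ≤ 1 - Real.exp (-(2/(n:ℝ))) := by
      have h2nn : (0:ℝ) ≤ 2/(n:ℝ) := by positivity
      have : Real.exp (-(2/(n:ℝ))) ≤ 1 := Real.exp_le_one_iff.mpr (by linarith)
      linarith
    have h2N : 1 - Real.exp (-(2/(n:ℝ))) ≤ 2/(n:ℝ) := by
      linarith [one_sub_le_exp_neg (2/(n:ℝ))]
    have hAd : Real.exp (-1) - A ≤ 2/(n:ℝ) := by
      calc Real.exp (-1) - A ≤ Real.exp (-1) - Real.exp (-1 - 2/(n:ℝ)) := by linarith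
        _ = Real.exp (-1) * (1 - Real.exp (-(2/(n:ℝ)))) := by rw [heq]; ring
        _ ≤ 1 * (2/(n:ℝ)) := mul_le_mul he1 h2N hexpnn (by norm_num)
        _ = 2/(n:ℝ) := one_mul _
    have hexp2 : Real.exp (-1) * Real.exp (-1) = Real.exp (-2) := by
      rw [← Real.exp_add]; norm_num
    have hA2_ub : A^2 ≤ Real.exp (-2) := by
      have h := mul_le_mul hA_ub hA_ub hA0 he1'.le
      rw [hexp2] at h
      calc A^2 = A*A := sq A
        _ ≤ Real.exp (-2) := h
    have hA2_lb : Real.exp (-2) - A^2 ≤ 4/(n:ℝ) := by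
      have hf2 : Real.exp (-1) + A ≤ 2 := by linarith
      have hf3 : (Real.exp (-1) - A)*(Real.exp (-1) + A) ≤ (2/(n:ℝ))*2 :=
        mul_le_mul hAd hf2 (by linarith) (by positivity)
      have hid : Real.exp (-2) - A^2 = (Real.exp (-1) - A)*(Real.exp (-1) + A) := by
        rw [← hexp2]; ring
      rw [hid]
      calc (Real.exp (-1) - A)*(Real.exp (-1) + A) ≤ (2/(n:ℝ))*2 := hf3
        _ = 4/(n:ℝ) := by ring
    -- δ and Bernoulli
    set δ : ℝ := 1/((n:ℝ)-1)^2 with hδdef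
    have hδ0 : (0:ℝ) ≤ δ := by rw [hδdef]; positivity
    have hδ1 : δ ≤ 1 := by
      rw [hδdef, div_le_one (by positivity)]
      nlinarith
    have hB_eq : (1-2/(n:ℝ))^n = A^2 * (1-δ)^n := by
      have hab : (1-2/(n:ℝ)) = (1-1/(n:ℝ))^2 * (1-δ) := by
        rw [hδdef]
        field_simp
        ring
      rw [hab, mul_pow, hAdef, ← pow_mul, Nat.mul_comm 2 n, pow_mul]
    have hg := pow_one_sub_ge δ hδ0 hδ1 n
    have hl := pow_one_sub_le δ hδ0 hδ1 n
    set θ : ℝ := (1-δ)^n - (1 - (n:ℝ)*δ) with hθdef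
    have hθ0 : 0 ≤ θ := by rw [hθdef]; linarith
    have hθub : θ ≤ (n:ℝ)^2*δ^2 := by rw [hθdef]; linarith
    have hsub : (1-δ)^n = 1 - (n:ℝ)*δ + θ := by rw [hθdef]; ring
    clear_value θ
    clear_value δ
    -- exact identity
    have hiden : varRuns n - (Real.exp (-1) - 2*Real.exp (-2))*(n:ℝ)
        = (n:ℝ)*(A - Real.exp (-1))
          + (2*Real.exp (-2)*(n:ℝ) - (n:ℝ)*A^2*(1 + (n:ℝ)/((n:ℝ)-1)))
          + (n:ℝ)^2*A^2*(1-1/(n:ℝ))*θ := by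
      rw [hclosed, hB_eq, hsub, hδdef]
      field_simp
      ring
    -- T1
    have hT1 : |(n:ℝ)*(A - Real.exp (-1))| ≤ 2 := by
      rw [abs_mul, abs_of_pos hN0]
      have h1 : |A - Real.exp (-1)| ≤ 2/(n:ℝ) := abs_le.mpr ⟨by linarith, by linarith⟩
      calc (n:ℝ) * |A - Real.exp (-1)| ≤ (n:ℝ) * (2/(n:ℝ)) :=
            mul_le_mul_of_nonneg_left h1 hN0.le
        _ = 2 := by field_simp
    -- T3
    have hq : (n:ℝ)^2 * ((n:ℝ)^2*δ^2) ≤ 4 := by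
      rw [hδdef]
      have e1 : (n:ℝ)^2*((n:ℝ)^2*(1/((n:ℝ)-1)^2)^2) = ((n:ℝ)/((n:ℝ)-1))^4 := by
        field_simp
      rw [e1]
      have e2 : (n:ℝ)/((n:ℝ)-1) ≤ 4/3 := by
        rw [div_le_div_iff₀ hNm0 (by norm_num : (0:ℝ) < 3)]
        linarith
      have e3 : ((n:ℝ)/((n:ℝ)-1))^4 ≤ (4/3:ℝ)^4 := pow_le_pow_left₀ (by positivity) e2 4
      have e4 : ((4:ℝ)/3)^4 ≤ 4 := by norm_num
      linarith
    have hA1 : A ≤ 1 := le_trans hA_ub he1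
    have hA21 : A^2 ≤ 1 := by
      calc A^2 = A*A := sq A
        _ ≤ 1*1 := mul_le_mul hA1 hA1 hA0 (by norm_num)
        _ = 1 := by norm_num
    have hA2a : A^2*(1-1/(n:ℝ)) ≤ 1 :=
      mul_le_one₀ hA21 ha0.le ha1
    have hT3nn : 0 ≤ (n:ℝ)^2*A^2*(1-1/(n:ℝ))*θ := by
      apply mul_nonneg _ hθ0
      apply mul_nonneg _ ha0.le
      positivity
    have hT3 : |(n:ℝ)^2*A^2*(1-1/(n:ℝ))*θ| ≤ 4 := by
      rw [abs_of_nonneg hT3nn]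
      calc (n:ℝ)^2*A^2*(1-1/(n:ℝ))*θ = (A^2*(1-1/(n:ℝ)))*((n:ℝ)^2*θ) := by ring
        _ ≤ 1*((n:ℝ)^2*θ) := by
            apply mul_le_mul_of_nonneg_right hA2a
            exact mul_nonneg (by positivity) hθ0
        _ = (n:ℝ)^2*θ := one_mul _
        _ ≤ (n:ℝ)^2*((n:ℝ)^2*δ^2) := mul_le_mul_of_nonneg_left hθub (by positivity)
        _ ≤ 4 := hq
    -- T2
    have hsval : (n:ℝ)/((n:ℝ)-1) = 1 + 1/((n:ℝ)-1) := by field_simp; ring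
    have hs2 : 2 ≤ 1 + (n:ℝ)/((n:ℝ)-1) := by
      rw [hsval]
      have : 0 < 1/((n:ℝ)-1) := by positivity
      linarith
    have hs3 : 1 + (n:ℝ)/((n:ℝ)-1) ≤ 2 + 2/(n:ℝ) := by
      rw [hsval]
      have : 1/((n:ℝ)-1) ≤ 2/(n:ℝ) := by
        rw [div_le_div_iff₀ hNm0 hN0]; linarith
      linarith
    have hs3' : 1 + (n:ℝ)/((n:ℝ)-1) ≤ 3 := by
      have : 2/(n:ℝ) ≤ 1 := by rw [div_le_one hN0]; linarith
      linarith
    have hid2 : 2*Real.exp (-2) - A^2*(1 + (n:ℝ)/((n:ℝ)-1))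
        = (Real.exp (-2) - A^2)*(1 + (n:ℝ)/((n:ℝ)-1))
          + Real.exp (-2)*(2 - (1 + (n:ℝ)/((n:ℝ)-1))) := by ring
    have hup : 2*Real.exp (-2) - A^2*(1 + (n:ℝ)/((n:ℝ)-1)) ≤ 12/(n:ℝ) := by
      have h1 : (Real.exp (-2) - A^2)*(1 + (n:ℝ)/((n:ℝ)-1)) ≤ (4/(n:ℝ))*3 :=
        mul_le_mul hA2_lb hs3' (by linarith) (by positivity)
      have h2 : Real.exp (-2)*(2 - (1 + (n:ℝ)/((n:ℝ)-1))) ≤ 0 :=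
        mul_nonpos_of_nonneg_of_nonpos he2'.le (by linarith)
      rw [hid2]
      calc (Real.exp (-2) - A^2)*(1 + (n:ℝ)/((n:ℝ)-1))
            + Real.exp (-2)*(2 - (1 + (n:ℝ)/((n:ℝ)-1)))
          ≤ (4/(n:ℝ))*3 + 0 := add_le_add h1 h2
        _ = 12/(n:ℝ) := by ring
    have hlow : -(2/(n:ℝ)) ≤ 2*Real.exp (-2) - A^2*(1 + (n:ℝ)/((n:ℝ)-1)) := by
      have h1 : 0 ≤ (Real.exp (-2) - A^2)*(1 + (n:ℝ)/((n:ℝ)-1)) :=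
        mul_nonneg (by linarith) (by linarith)
      have h2 : 1*(2 - (1 + (n:ℝ)/((n:ℝ)-1))) ≤ Real.exp (-2)*(2 - (1 + (n:ℝ)/((n:ℝ)-1))) :=
        mul_le_mul_of_nonpos_right he2 (by linarith)
      have h3 : -(2/(n:ℝ)) ≤ 1*(2 - (1 + (n:ℝ)/((n:ℝ)-1))) := by
        rw [one_mul]
        linarith
      rw [hid2]
      linarith
    have hT2 : |2*Real.exp (-2)*(n:ℝ) - (n:ℝ)*A^2*(1 + (n:ℝ)/((n:ℝ)-1))| ≤ 12 := by
      have hid3 : 2*Real.exp (-2)*(n:ℝ) - (n:ℝ)*A^2*(1 + (n:ℝ)/((n:ℝ)-1))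
          = (n:ℝ)*(2*Real.exp (-2) - A^2*(1 + (n:ℝ)/((n:ℝ)-1))) := by ring
      rw [abs_le, hid3]
      constructor
      · have h := mul_le_mul_of_nonneg_left hlow hN0.le
        have he : (n:ℝ)*(-(2/(n:ℝ))) = -2 := by
          first
          | (field_simp; ring)
          | field_simp
        rw [he] at h
        linarith
      · have h := mul_le_mul_of_nonneg_left hup hN0.le
        have he : (n:ℝ)*(12/(n:ℝ)) = 12 := by
          first
          | (field_simp; ring)
          | field_simp
        rw [he] at h
        linarith
    rw [hiden]
    calc |(n:ℝ)*(A - Real.exp (-1))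
          + (2*Real.exp (-2)*(n:ℝ) - (n:ℝ)*A^2*(1 + (n:ℝ)/((n:ℝ)-1)))
          + (n:ℝ)^2*A^2*(1-1/(n:ℝ))*θ|
        ≤ |(n:ℝ)*(A - Real.exp (-1))|
          + |2*Real.exp (-2)*(n:ℝ) - (n:ℝ)*A^2*(1 + (n:ℝ)/((n:ℝ)-1))|
          + |(n:ℝ)^2*A^2*(1-1/(n:ℝ))*θ| := by
          have h1 := abs_add_le ((n:ℝ)*(A - Real.exp (-1))
            + (2*Real.exp (-2)*(n:ℝ) - (n:ℝ)*A^2*(1 + (n:ℝ)/((n:ℝ)-1))))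
            ((n:ℝ)^2*A^2*(1-1/(n:ℝ))*θ)
          have h2 := abs_add_le ((n:ℝ)*(A - Real.exp (-1)))
            (2*Real.exp (-2)*(n:ℝ) - (n:ℝ)*A^2*(1 + (n:ℝ)/((n:ℝ)-1)))
          linarith
      _ ≤ 2 + 12 + 4 := by linarith
      _ ≤ 32 := by norm_num
  · -- small n
    have hN3 : (n:ℝ) ≤ 3 := by exact_mod_cast (by omega : n ≤ 3)
    have ha0 : (0:ℝ) ≤ 1 - 1/(n:ℝ) := by
      have : 1/(n:ℝ) ≤ 1 := by rw [div_le_one hN0]; linarith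
      linarith
    have ha1 : 1 - 1/(n:ℝ) ≤ 1 := by
      have : (0:ℝ) ≤ 1/(n:ℝ) := by positivity
      linarith
    have hb' : |1 - 2/(n:ℝ)| ≤ 1 := by
      rw [abs_le]
      have h1 : 2/(n:ℝ) ≤ 2 := by rw [div_le_iff₀ hN0]; linarith
      have h2 : 0 ≤ 2/(n:ℝ) := by positivity
      constructor <;> linarith
    have hA : |(1-1/(n:ℝ))^n| ≤ 1 := by
      rw [abs_pow]
      exact pow_le_one₀ (abs_nonneg _) (by rw [abs_of_nonneg ha0]; exact ha1)
    have hB : |(1-2/(n:ℝ))^n| ≤ 1 := by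
      rw [abs_pow]
      exact pow_le_one₀ (abs_nonneg _) hb'
    rw [hclosed]
    refine le_trans (habs3 _ _ _) ?_
    have h1 : |(n:ℝ) * (1-1/(n:ℝ))^n| ≤ 3 := by
      rw [abs_mul, abs_of_pos hN0]
      calc (n:ℝ) * |(1-1/(n:ℝ))^n| ≤ 3 * 1 :=
        mul_le_mul hN3 hA (abs_nonneg _) (by norm_num)
      _ = 3 := by norm_num
    have h2 : |(n:ℝ)^2 * ((1-1/(n:ℝ)) * (1-2/(n:ℝ))^n - ((1-1/(n:ℝ))^n)^2)| ≤ 18 := by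
      rw [abs_mul]
      have hN9 : |(n:ℝ)^2| ≤ 9 := by
        rw [abs_of_nonneg (by positivity)]
        nlinarith
      have hin : |(1-1/(n:ℝ)) * (1-2/(n:ℝ))^n - ((1-1/(n:ℝ))^n)^2| ≤ 2 := by
        have e1 : |(1-1/(n:ℝ)) * (1-2/(n:ℝ))^n| ≤ 1 := by
          rw [abs_mul]
          calc |1-1/(n:ℝ)| * |(1-2/(n:ℝ))^n| ≤ 1 * 1 :=
            mul_le_mul (by rw [abs_of_nonneg ha0]; exact ha1) hB (abs_nonneg _) (by norm_num)
          _ = 1 := by norm_num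
        have e2 : |((1-1/(n:ℝ))^n)^2| ≤ 1 := by
          rw [abs_pow]
          exact pow_le_one₀ (abs_nonneg _) hA
        calc |(1-1/(n:ℝ)) * (1-2/(n:ℝ))^n - ((1-1/(n:ℝ))^n)^2|
            ≤ |(1-1/(n:ℝ)) * (1-2/(n:ℝ))^n| + |((1-1/(n:ℝ))^n)^2| := abs_sub _ _
          _ ≤ 2 := by linarith
      calc |(n:ℝ)^2| * |(1-1/(n:ℝ)) * (1-2/(n:ℝ))^n - ((1-1/(n:ℝ))^n)^2| ≤ 9 * 2 :=
        mul_le_mul hN9 hin (abs_nonneg _) (by norm_num)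
      _ = 18 := by norm_num
    have h3 : |(Real.exp (-1) - 2*Real.exp (-2)) * (n:ℝ)| ≤ 9 := by
      rw [abs_mul, abs_of_pos hN0]
      have hc : |Real.exp (-1) - 2*Real.exp (-2)| ≤ 3 := by
        rw [abs_le]
        constructor <;> nlinarith
      calc |Real.exp (-1) - 2*Real.exp (-2)| * (n:ℝ) ≤ 3 * 3 :=
        mul_le_mul hc hN3 hN0.le (by norm_num)
      _ = 9 := by norm_num
    linarith
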